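/- In the ∂₀λ-calculus, a closed term M that reduces to a sum containing the identity (M →* I + 𝕄) can be made to reduce exactly to I by applying finitely many closed bags: there exist bags P⃗ with M P₁ ⋯ P_n →* I. -/

import Mathlib

/-- Terms of the (promotion- and test-free) `∂₀λ`-calculus. -/
inductive Tm : Type
  | var : ℕ → Tm
  | lam : ℕ → Tm → Tm
  | app : Tm → List Tm → Tm

mutual
def fv : Tm → Set ℕ
  | .var y => {y}
  | .lam y M => fv M \ {y}
  | .app M P => fv M ∪ fvList P
def fvList : List Tm → Set ℕ
  | [] => ∅
  | L :: P => fv L ∪ fvList P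
end

mutual
def lsub (x : ℕ) (N : Tm) : Tm → Set Tm
  | .var y => if y = x then {N} else ∅
  | .lam y M => if y = x then ∅ else {A | ∃ M' ∈ lsub x N M, A = Tm.lam y M'}
  | .app M P => {A | ∃ M' ∈ lsub x N M, A = Tm.app M' P} ∪
      {A | ∃ P' ∈ lsubList x N P, A = Tm.app M P'}
def lsubList (x : ℕ) (N : Tm) : List Tm → Set (List Tm)
  | [] => ∅
  | L :: P => {Q | ∃ L' ∈ lsub x N L, Q = L' :: P} ∪
      {Q | ∃ P' ∈ lsubList x N P, Q = L :: P'}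
end

def lsubIter (x : ℕ) : Set Tm → List Tm → Set Tm
  | X, [] => X
  | X, L :: Ls => lsubIter x (⋃ A ∈ X, lsub x L A) Ls

def zeroSub (x : ℕ) (X : Set Tm) : Set Tm := {A ∈ X | x ∉ fv A}

mutual
/-- One-step reduction from a term to a (finite, idempotent) sum of terms,
represented as a set: β-reduction `(λx.M)P → M⟨P/x⟩[0/x]` closed under contexts. -/
inductive Step : Tm → Set Tm → Prop
  | beta (x : ℕ) (M : Tm) (P : List Tm) :
      Step (.app (.lam x M) P) (zeroSub x (lsubIter x {M} P))
  | lam (x : ℕ) {M : Tm} {𝕄 : Set Tm} : Step M 𝕄 →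
      Step (.lam x M) {A | ∃ M' ∈ 𝕄, A = Tm.lam x M'}
  | appL {M : Tm} {𝕄 : Set Tm} (P : List Tm) : Step M 𝕄 →
      Step (.app M P) {A | ∃ M' ∈ 𝕄, A = Tm.app M' P}
  | appR (M : Tm) {P : List Tm} {ℙ : Set (List Tm)} : StepList P ℙ →
      Step (.app M P) {A | ∃ P' ∈ ℙ, A = Tm.app M P'}
/-- One-step reduction inside a bag (in exactly one element). -/
inductive StepList : List Tm → Set (List Tm) → Prop
  | head {L : Tm} {𝕃 : Set Tm} (P : List Tm) : Step L 𝕃 →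
      StepList (L :: P) {Q | ∃ L' ∈ 𝕃, Q = L' :: P}
  | tail (L : Tm) {P : List Tm} {ℙ : Set (List Tm)} : StepList P ℙ →
      StepList (L :: P) {Q | ∃ P' ∈ ℙ, Q = L :: P'}
end

/-- One-step reduction on sums of terms: reduce one summand. -/
def SStep (X Y : Set Tm) : Prop :=
  ∃ (A : Tm) (𝔹 𝕏 : Set Tm), X = insert A 𝕏 ∧ Step A 𝔹 ∧ Y = 𝔹 ∪ 𝕏

/-- The identity term `I = λx.x`. -/
def Iterm : Tm := .lam 0 (.var 0)

mutual
def sz : Tm → ℕ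
  | .var _ => 1
  | .lam _ M => sz M + 1
  | .app M P => sz M + szList P + 1
def szList : List Tm → ℕ
  | [] => 0
  | L :: P => sz L + szList P
end

mutual
def nv : Tm → ℕ
  | .var _ => 1
  | .lam y (.var z) => if z = y then 0 else 1
  | .lam _ M => nv M
  | .app M P => nv M + nvList P
def nvList : List Tm → ℕ
  | [] => 0
  | L :: P => nv L + nvList P
end

theorem nv_lam_le (y : ℕ) (M : Tm) : nv (Tm.lam y M) ≤ nv M := by
  cases M with
  | var z => by_cases h : z = y <;> simp [nv, h]
  | lam a b => simp [nv]
  | app a b => simp [nv]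

theorem nv_lam_eq (y : ℕ) (M : Tm) (h : ∀ z, M = Tm.var z → z ≠ y) :
    nv (Tm.lam y M) = nv M := by
  cases M with
  | var z => simp [nv, h z rfl]
  | lam a b => simp [nv]
  | app a b => simp [nv]

theorem nv_lam_ge (y : ℕ) (M : Tm) : nv M ≤ nv (Tm.lam y M) + 1 := by
  cases M with
  | var z => by_cases h : z = y <;> simp [nv, h]
  | lam a b => simp [nv]
  | app a b => simp [nv]

mutual
theorem lsub_spec (x : ℕ) (N : Tm) : ∀ M, ∀ B ∈ lsub x N M,
    (sz B + 1 = sz M + sz N ∧ nv B + 1 ≤ nv M + nv N) ∧ fv B ⊆ fv M ∪ fv N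
  | .var y => by
    intro B hB
    by_cases h : y = x <;> simp [lsub, h] at hB
    subst hB
    refine ⟨⟨by simp only [sz]; omega, by simp only [nv]; omega⟩, by simp [fv]⟩
  | .lam y M => by
    intro B hB
    by_cases h : y = x <;> simp [lsub, h] at hB
    obtain ⟨M', hM', rfl⟩ := hB
    obtain ⟨⟨h1, h2⟩, h3⟩ := lsub_spec x N M M' hM'
    have hveq : nv (Tm.lam y M) = nv M := by
      refine nv_lam_eq y M ?_
      rintro z rfl hzy
      by_cases hzx : z = x
      · exact h (hzy ▸ hzx ▸ rfl) |>.elim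
      · simp [lsub, hzx] at hM'
    refine ⟨⟨?_, ?_⟩, ?_⟩
    · simp only [sz]; omega
    · calc nv (Tm.lam y M') + 1 ≤ nv M' + 1 := by
            have := nv_lam_le y M'; omega
        _ ≤ nv M + nv N := h2
        _ = nv (Tm.lam y M) + nv N := by rw [hveq]
    · simp only [fv]
      intro a ha
      rcases ha with ⟨ha1, ha2⟩
      rcases h3 ha1 with h4 | h4
      · exact Or.inl ⟨h4, ha2⟩
      · exact Or.inr h4
  | .app M P => by
    intro B hB
    rcases hB with ⟨M', hM', rfl⟩ | ⟨P', hP', rfl⟩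
    · obtain ⟨⟨h1, h2⟩, h3⟩ := lsub_spec x N M M' hM'
      refine ⟨⟨by simp only [sz]; omega, by simp only [nv]; omega⟩, ?_⟩
      simp only [fv]
      intro a ha
      rcases ha with ha | ha
      · rcases h3 ha with h4 | h4
        · exact Or.inl (Or.inl h4)
        · exact Or.inr h4
      · exact Or.inl (Or.inr ha)
    · obtain ⟨⟨h1, h2⟩, h3⟩ := lsubList_spec x N P P' hP'
      refine ⟨⟨by simp only [sz, szList]; omega, by simp only [nv, nvList]; omega⟩, ?_⟩
      simp only [fv]
      intro a ha
      rcases ha with ha | ha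
      · exact Or.inl (Or.inl ha)
      · rcases h3 ha with h4 | h4
        · exact Or.inl (Or.inr h4)
        · exact Or.inr h4
theorem lsubList_spec (x : ℕ) (N : Tm) : ∀ P, ∀ Q ∈ lsubList x N P,
    (szList Q + 1 = szList P + sz N ∧ nvList Q + 1 ≤ nvList P + nv N) ∧
      fvList Q ⊆ fvList P ∪ fv N
  | [] => by intro Q hQ; simp [lsubList] at hQ
  | L :: P => by
    intro Q hQ
    rcases hQ with ⟨L', hL', rfl⟩ | ⟨P', hP', rfl⟩
    · obtain ⟨⟨h1, h2⟩, h3⟩ := lsub_spec x N L L' hL'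
      refine ⟨⟨by simp only [szList]; omega, by simp only [nvList]; omega⟩, ?_⟩
      simp only [fvList]
      intro a ha
      rcases ha with ha | ha
      · rcases h3 ha with h4 | h4
        · exact Or.inl (Or.inl h4)
        · exact Or.inr h4
      · exact Or.inl (Or.inr ha)
    · obtain ⟨⟨h1, h2⟩, h3⟩ := lsubList_spec x N P P' hP'
      refine ⟨⟨by simp only [szList]; omega, by simp only [nvList]; omega⟩, ?_⟩
      simp only [fvList]
      intro a ha
      rcases ha with ha | ha
      · exact Or.inl (Or.inl ha)
      · rcases h3 ha with h4 | h4
        · exact Or.inl (Or.inr h4)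
        · exact Or.inr h4
end

theorem lsubIter_spec (x : ℕ) : ∀ (P : List Tm) (X : Set Tm), ∀ B ∈ lsubIter x X P,
    ∃ A ∈ X, (sz B + P.length = sz A + szList P ∧ nv B + P.length ≤ nv A + nvList P) ∧
      fv B ⊆ fv A ∪ fvList P
  | [], X => by
    intro B hB
    exact ⟨B, hB, ⟨by simp [szList], by simp [nvList]⟩, by simp [fvList]⟩
  | L :: Ls, X => by
    intro B hB
    have hB' : B ∈ lsubIter x (⋃ A ∈ X, lsub x L A) Ls := hB
    obtain ⟨A', hA', ⟨h1, h2⟩, h3⟩ := lsubIter_spec x Ls _ B hB'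
    simp only [Set.mem_iUnion] at hA'
    obtain ⟨A, hA, hA'2⟩ := hA'
    obtain ⟨⟨g1, g2⟩, g3⟩ := lsub_spec x L A A' hA'2
    refine ⟨A, hA, ⟨by simp only [List.length, szList]; omega,
      by simp only [List.length, nvList]; omega⟩, ?_⟩
    intro a ha
    rcases h3 ha with h4 | h4
    · rcases g3 h4 with h5 | h5
      · exact Or.inl h5
      · exact Or.inr (by simp only [fvList]; exact Or.inl h5)
    · exact Or.inr (by simp only [fvList]; exact Or.inr h4)
theorem setOf_lam_eq (x : ℕ) (𝕄 : Set Tm) :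
    {A | ∃ M' ∈ 𝕄, A = Tm.lam x M'} = (fun M' => Tm.lam x M') '' 𝕄 := by
  ext A; simp [Set.mem_image, eq_comm]

theorem setOf_appL_eq (P : List Tm) (𝕄 : Set Tm) :
    {A | ∃ M' ∈ 𝕄, A = Tm.app M' P} = (fun M' => Tm.app M' P) '' 𝕄 := by
  ext A; simp [Set.mem_image, eq_comm]

theorem setOf_appR_eq (M : Tm) (ℙ : Set (List Tm)) :
    {A | ∃ P' ∈ ℙ, A = Tm.app M P'} = (fun P' => Tm.app M P') '' ℙ := by
  ext A; simp [Set.mem_image, eq_comm]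

theorem setOf_cons_head_eq (P : List Tm) (𝕃 : Set Tm) :
    {Q | ∃ L' ∈ 𝕃, Q = L' :: P} = (fun L' => L' :: P) '' 𝕃 := by
  ext Q; simp [Set.mem_image, eq_comm]

theorem setOf_cons_tail_eq (L : Tm) (ℙ : Set (List Tm)) :
    {Q | ∃ P' ∈ ℙ, Q = L :: P'} = (fun P' => L :: P') '' ℙ := by
  ext Q; simp [Set.mem_image, eq_comm]

mutual
theorem lsub_fin (x : ℕ) (N : Tm) : ∀ M, (lsub x N M).Finite
  | .var y => by
    by_cases h : y = x <;> simp [lsub, h]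
  | .lam y M => by
    by_cases h : y = x <;> simp only [lsub, h, if_true, if_false]
    · exact Set.finite_empty
    · rw [setOf_lam_eq]; exact (lsub_fin x N M).image _
  | .app M P => by
    simp only [lsub]
    refine Set.Finite.union ?_ ?_
    · rw [setOf_appL_eq]; exact (lsub_fin x N M).image _
    · rw [setOf_appR_eq]; exact (lsubList_fin x N P).image _
theorem lsubList_fin (x : ℕ) (N : Tm) : ∀ P, (lsubList x N P).Finite
  | [] => by simp [lsubList]
  | L :: P => by
    simp only [lsubList]
    refine Set.Finite.union ?_ ?_
    · rw [setOf_cons_head_eq]; exact (lsub_fin x N L).image _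
    · rw [setOf_cons_tail_eq]; exact (lsubList_fin x N P).image _
end

theorem lsubIter_fin (x : ℕ) : ∀ (P : List Tm) (X : Set Tm), X.Finite →
    (lsubIter x X P).Finite
  | [], X => fun h => h
  | L :: Ls, X => fun h => by
    have : (⋃ A ∈ X, lsub x L A).Finite := h.biUnion (fun A _ => lsub_fin x L A)
    exact lsubIter_fin x Ls _ this

theorem zeroSub_fin (x : ℕ) (X : Set Tm) (h : X.Finite) : (zeroSub x X).Finite :=
  h.subset (fun A hA => hA.1)

mutual
theorem step_fin {A : Tm} {𝔹 : Set Tm} (h : Step A 𝔹) : 𝔹.Finite := by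
  cases h with
  | beta x M P => exact zeroSub_fin x _ (lsubIter_fin x P {M} (Set.finite_singleton M))
  | lam x h' => rw [setOf_lam_eq]; exact (step_fin h').image _
  | appL P h' => rw [setOf_appL_eq]; exact (step_fin h').image _
  | appR M h' => rw [setOf_appR_eq]; exact (stepList_fin h').image _
theorem stepList_fin {P : List Tm} {ℙ : Set (List Tm)} (h : StepList P ℙ) : ℙ.Finite := by
  cases h with
  | head P h' => rw [setOf_cons_head_eq]; exact (step_fin h').image _
  | tail L h' => rw [setOf_cons_tail_eq]; exact (stepList_fin h').image _
end

mutual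
theorem step_fv {A : Tm} {𝔹 : Set Tm} (h : Step A 𝔹) : ∀ B ∈ 𝔹, fv B ⊆ fv A := by
  cases h with
  | beta x M P =>
    intro B hB
    obtain ⟨hB1, hB2⟩ := hB
    obtain ⟨A', hA', _, h3⟩ := lsubIter_spec x P {M} B hB1
    rcases hA' with rfl
    intro a ha
    simp only [fv]
    rcases h3 ha with h4 | h4
    · exact Or.inl ⟨h4, fun h5 => hB2 ((Set.mem_singleton_iff.mp h5) ▸ ha)⟩
    · exact Or.inr h4
  | lam x h' =>
    intro B hB
    obtain ⟨M', hM', rfl⟩ := hB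
    simp only [fv]
    exact Set.diff_subset_diff_left (step_fv h' M' hM')
  | appL P h' =>
    intro B hB
    obtain ⟨M', hM', rfl⟩ := hB
    simp only [fv]
    exact Set.union_subset_union_left _ (step_fv h' M' hM')
  | appR M h' =>
    intro B hB
    obtain ⟨P', hP', rfl⟩ := hB
    simp only [fv]
    exact Set.union_subset_union_right _ (stepList_fv h' P' hP')
theorem stepList_fv {P : List Tm} {ℙ : Set (List Tm)} (h : StepList P ℙ) :
    ∀ Q ∈ ℙ, fvList Q ⊆ fvList P := by
  cases h with
  | head P h' =>
    intro Q hQ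
    obtain ⟨L', hL', rfl⟩ := hQ
    simp only [fvList]
    exact Set.union_subset_union_left _ (step_fv h' L' hL')
  | tail L h' =>
    intro Q hQ
    obtain ⟨P', hP', rfl⟩ := hQ
    simp only [fvList]
    exact Set.union_subset_union_right _ (stepList_fv h' P' hP')
end
open Relation

theorem sstep_singleton {A : Tm} {𝔹 : Set Tm} (h : Step A 𝔹) : SStep {A} 𝔹 :=
  ⟨A, 𝔹, ∅, by simp, h, by simp⟩

theorem sstep_union_right {X Y Z : Set Tm} (h : SStep X Y) : SStep (X ∪ Z) (Y ∪ Z) := by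
  obtain ⟨A, 𝔹, 𝕏, rfl, hstep, rfl⟩ := h
  exact ⟨A, 𝔹, 𝕏 ∪ Z, by rw [Set.insert_union], hstep, by rw [Set.union_assoc]⟩

theorem rtg_union_right {X Y Z : Set Tm} (h : ReflTransGen SStep X Y) :
    ReflTransGen SStep (X ∪ Z) (Y ∪ Z) :=
  ReflTransGen.lift (fun W => W ∪ Z) (fun _ _ hs => sstep_union_right hs) _ _ h

theorem rtg_union {X Y X' Y' : Set Tm} (h : ReflTransGen SStep X Y)
    (h' : ReflTransGen SStep X' Y') : ReflTransGen SStep (X ∪ X') (Y ∪ Y') := by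
  refine ReflTransGen.trans (rtg_union_right h) ?_
  rw [Set.union_comm Y X', Set.union_comm Y Y']
  exact rtg_union_right h'

theorem sstep_fin {X Y : Set Tm} (h : SStep X Y) (hX : X.Finite) : Y.Finite := by
  obtain ⟨A, 𝔹, 𝕏, rfl, hstep, rfl⟩ := h
  exact (step_fin hstep).union (hX.subset (Set.subset_insert _ _))

theorem sstep_closed {X Y : Set Tm} (h : SStep X Y) (hX : ∀ A ∈ X, fv A = ∅) :
    ∀ B ∈ Y, fv B = ∅ := by
  obtain ⟨A, 𝔹, 𝕏, rfl, hstep, rfl⟩ := h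
  intro B hB
  rcases hB with hB | hB
  · have := step_fv hstep B hB
    rw [hX A (Set.mem_insert _ _)] at this
    exact Set.eq_empty_iff_forall_notMem.mpr (fun a ha => this ha)
  · exact hX B (Set.mem_insert_of_mem _ hB)

theorem rtg_fin {X Y : Set Tm} (h : ReflTransGen SStep X Y) (hX : X.Finite) : Y.Finite := by
  induction h with
  | refl => exact hX
  | tail _ hs ih => exact sstep_fin hs ih

theorem rtg_closed {X Y : Set Tm} (h : ReflTransGen SStep X Y) (hX : ∀ A ∈ X, fv A = ∅) :
    ∀ B ∈ Y, fv B = ∅ := by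
  induction h with
  | refl => exact hX
  | tail _ hs ih => exact sstep_closed hs ih

/-- `iterI n A` is `A` applied to `n` copies of the bag `[I]`. -/
def iterI : ℕ → Tm → Tm
  | 0, A => A
  | n + 1, A => iterI n (Tm.app A [Iterm])

theorem iterI_add (a b : ℕ) (A : Tm) : iterI (a + b) A = iterI b (iterI a A) := by
  induction a generalizing A with
  | zero => simp [iterI]
  | succ n ih =>
    have : n + 1 + b = n + b + 1 := by omega
    rw [this]
    show iterI (n + b) (Tm.app A [Iterm]) = iterI b (iterI n (Tm.app A [Iterm]))
    exact ih _

theorem step_iterI {A : Tm} {𝔹 : Set Tm} (n : ℕ) (h : Step A 𝔹) :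
    Step (iterI n A) ((iterI n) '' 𝔹) := by
  induction n generalizing A 𝔹 with
  | zero => simpa [iterI] using h
  | succ n ih =>
    have h1 : Step (Tm.app A [Iterm]) ((fun B => Tm.app B [Iterm]) '' 𝔹) := by
      rw [← setOf_appL_eq]; exact Step.appL [Iterm] h
    have h2 := ih h1
    rw [Set.image_image] at h2
    exact h2

theorem sstep_image_iterI {X Y : Set Tm} (n : ℕ) (h : SStep X Y) :
    SStep ((iterI n) '' X) ((iterI n) '' Y) := by
  obtain ⟨A, 𝔹, 𝕏, rfl, hstep, rfl⟩ := h
  exact ⟨iterI n A, (iterI n) '' 𝔹, (iterI n) '' 𝕏, by rw [Set.image_insert_eq],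
    step_iterI n hstep, by rw [Set.image_union]⟩

theorem rtg_image_iterI {X Y : Set Tm} (n : ℕ) (h : ReflTransGen SStep X Y) :
    ReflTransGen SStep ((iterI n) '' X) ((iterI n) '' Y) :=
  ReflTransGen.lift (iterI n '' ·) (fun _ _ hs => sstep_image_iterI n hs) _ _ h

theorem fv_Iterm : fv Iterm = ∅ := by
  show fv (Tm.var 0) \ {0} = ∅
  simp [fv]

theorem Ibeta (x : ℕ) : zeroSub x (lsubIter x {Tm.var x} [Iterm]) = {Iterm} := by
  have h1 : lsubIter x {Tm.var x} [Iterm] = lsub x Iterm (Tm.var x) := by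
    show lsubIter x (⋃ A ∈ ({Tm.var x} : Set Tm), lsub x Iterm A) [] = _
    simp [lsubIter]
  rw [h1]
  simp only [lsub, if_pos rfl]
  ext A
  simp only [zeroSub, Set.mem_setOf_eq, Set.mem_singleton_iff]
  constructor
  · rintro ⟨rfl, _⟩; rfl
  · rintro rfl; exact ⟨rfl, by rw [fv_Iterm]; simp⟩

theorem step_I_bag : Step (Tm.app Iterm [Iterm]) {Iterm} := by
  have := Step.beta 0 (Tm.var 0) [Iterm]
  rwa [Ibeta 0] at this

theorem pad (n : ℕ) : ReflTransGen SStep {iterI n Iterm} {Iterm} := by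
  induction n with
  | zero => exact ReflTransGen.refl
  | succ n ih =>
    have h1 : Step (iterI n (Tm.app Iterm [Iterm])) ((iterI n) '' {Iterm}) :=
      step_iterI n step_I_bag
    rw [Set.image_singleton] at h1
    exact ReflTransGen.head (sstep_singleton h1) ih

theorem pad_mono {A : Tm} {n : ℕ}
    (h : ReflTransGen SStep {iterI n A} ∅ ∨ ReflTransGen SStep {iterI n A} {Iterm}) :
    ∀ m, n ≤ m →
      ReflTransGen SStep {iterI m A} ∅ ∨ ReflTransGen SStep {iterI m A} {Iterm} := by
  intro m hnm
  obtain ⟨k, rfl⟩ := Nat.exists_eq_add_of_le hnm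
  rw [iterI_add]
  rcases h with h | h
  · left
    have := rtg_image_iterI k h
    rwa [Set.image_singleton, Set.image_empty] at this
  · right
    have := rtg_image_iterI k h
    rw [Set.image_singleton, Set.image_singleton] at this
    exact this.trans (pad k)

theorem unionRed {g₀ : Tm → Tm} {g : Tm → Set Tm} : ∀ (S : Set Tm), S.Finite →
    (∀ B ∈ S, ReflTransGen SStep {g₀ B} (g B)) →
    ReflTransGen SStep (g₀ '' S) (⋃ B ∈ S, g B) := by
  intro S hS
  refine Set.Finite.induction_on (motive := fun S _ => (∀ B ∈ S, ReflTransGen SStep {g₀ B} (g B)) →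
    ReflTransGen SStep (g₀ '' S) (⋃ B ∈ S, g B)) S hS (by intro _; rw [Set.image_empty, show (⋃ B ∈ (∅ : Set Tm), g B) = ∅ by simp]) ?_
  intro A S' _ _ ih hall
  rw [Set.image_insert_eq, Set.biUnion_insert]
  have h1 : insert (g₀ A) (g₀ '' S') = {g₀ A} ∪ g₀ '' S' := by simp
  rw [h1]
  exact rtg_union (hall A (Set.mem_insert _ _))
    (ih (fun B hB => hall B (Set.mem_insert_of_mem _ hB)))
theorem nv_Iterm : nv Iterm = 0 := by simp [Iterm, nv]

theorem lsubIter_one (x : ℕ) (M L : Tm) : lsubIter x {M} [L] = lsub x L M := by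
  show lsubIter x (⋃ A ∈ ({M} : Set Tm), lsub x L A) [] = _
  simp [lsubIter]

theorem redex : ∀ (M : Tm) (P : List Tm), fv M = ∅ →
    ∃ 𝔹, Step (Tm.app M P) 𝔹 ∧ 𝔹.Finite ∧
      ∀ B ∈ 𝔹, fv B ⊆ fvList P ∧ sz B < sz (Tm.app M P) ∧ nv B ≤ nv (Tm.app M P)
  | .var y, P => by intro hM; simp [fv] at hM
  | .lam x M', P => by
    intro hM
    have hM' : fv M' ⊆ {x} := by
      have : fv M' \ {x} = ∅ := hM
      intro a ha
      by_contra hax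
      exact absurd (Set.eq_empty_iff_forall_notMem.mp this a ⟨ha, hax⟩) (fun h => h)
    refine ⟨zeroSub x (lsubIter x {M'} P), Step.beta x M' P,
      zeroSub_fin x _ (lsubIter_fin x P {M'} (Set.finite_singleton M')), ?_⟩
    intro B hB
    obtain ⟨h1, h2⟩ := hB
    obtain ⟨A, hA, ⟨g1, g2⟩, g3⟩ := lsubIter_spec x P {M'} B h1
    rcases hA with rfl
    refine ⟨?_, by simp only [sz]; omega, ?_⟩
    · intro a ha
      rcases g3 ha with h4 | h4
      · exact absurd ((hM' h4) ▸ rfl : a ∈ ({x} : Set ℕ)) (by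
          intro hax
          exact h2 ((Set.mem_singleton_iff.mp hax) ▸ ha))
      · exact h4
    · cases P with
      | nil =>
        have hBM : B = A := by simpa [lsubIter] using h1
        subst hBM
        have hAx : ∀ z, B = Tm.var z → z ≠ x := by
          rintro z rfl hzx
          exact h2 (by simp [fv, hzx])
        have := nv_lam_eq x B hAx
        simp only [nv, nvList]
        omega
      | cons L Ls =>
        have hlen : 1 ≤ (L :: Ls).length := by simp
        have := nv_lam_ge x A
        simp only [nv] at *
        omega
  | .app M1 P1, P => by
    intro hM
    have hM1 : fv M1 = ∅ ∧ fvList P1 = ∅ := by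
      constructor <;> [exact Set.eq_empty_iff_forall_notMem.mpr
          (fun a ha => Set.eq_empty_iff_forall_notMem.mp hM a (Or.inl ha));
        exact Set.eq_empty_iff_forall_notMem.mpr
          (fun a ha => Set.eq_empty_iff_forall_notMem.mp hM a (Or.inr ha))]
    obtain ⟨𝔹₁, hstep, hfin, hprop⟩ := redex M1 P1 hM1.1
    refine ⟨{A | ∃ M' ∈ 𝔹₁, A = Tm.app M' P}, Step.appL P hstep, ?_, ?_⟩
    · rw [setOf_appL_eq]; exact hfin.image _
    · rintro B ⟨M', hM'mem, rfl⟩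
      obtain ⟨p1, p2, p3⟩ := hprop M' hM'mem
      refine ⟨?_, by simp only [sz] at *; omega, by simp only [nv] at *; omega⟩
      intro a ha
      rcases ha with ha | ha
      · have := p1 ha
        rw [hM1.2] at this
        exact this.elim
      · exact ha
theorem collapse : ∀ (A : Tm), fv A = ∅ →
    ∃ n, Relation.ReflTransGen SStep {iterI n A} ∅ ∨
      Relation.ReflTransGen SStep {iterI n A} {Iterm}
  | .var y, hA => by simp [fv] at hA
  | .lam x (.var z), hA => by
    have hzx : z = x := by
      by_contra hzx
      have : z ∈ fv (Tm.lam x (Tm.var z)) := ⟨rfl, by simpa using hzx⟩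
      rw [hA] at this
      exact this
    subst hzx
    refine ⟨1, Or.inr ?_⟩
    have hstep : Step (Tm.app (Tm.lam z (Tm.var z)) [Iterm]) {Iterm} := by
      have := Step.beta z (Tm.var z) [Iterm]
      rwa [Ibeta z] at this
    exact Relation.ReflTransGen.single (sstep_singleton hstep)
  | .lam x B, hA => by
    by_cases hvar : ∃ z, B = Tm.var z
    · obtain ⟨z, rfl⟩ := hvar
      have hzx : z = x := by
        by_contra hzx
        have : z ∈ fv (Tm.lam x (Tm.var z)) := ⟨rfl, by simpa using hzx⟩
        rw [hA] at this
        exact this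
      subst hzx
      refine ⟨1, Or.inr ?_⟩
      have hstep : Step (Tm.app (Tm.lam z (Tm.var z)) [Iterm]) {Iterm} := by
        have := Step.beta z (Tm.var z) [Iterm]
        rwa [Ibeta z] at this
      exact Relation.ReflTransGen.single (sstep_singleton hstep)
    · have hBx : ∀ z, B = Tm.var z → z ≠ x := fun z hz => absurd (Exists.intro z hz) hvar
      have hnvA : nv (Tm.lam x B) = nv B := nv_lam_eq x B hBx
      have hfvB : fv B ⊆ {x} := by
        have hd : fv B \ {x} = ∅ := hA
        intro a ha
        by_contra hax
        exact absurd (Set.eq_empty_iff_forall_notMem.mp hd a ⟨ha, hax⟩) (fun h => h)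
      have hstep : Step (Tm.app (Tm.lam x B) [Iterm]) (zeroSub x (lsub x Iterm B)) := by
        have := Step.beta x B [Iterm]
        rwa [lsubIter_one] at this
      have hfin : (zeroSub x (lsub x Iterm B)).Finite := zeroSub_fin _ _ (lsub_fin x Iterm B)
      have hprop : ∀ B' ∈ zeroSub x (lsub x Iterm B), fv B' = ∅ ∧ nv B' < nv (Tm.lam x B) := by
        intro B' hB'
        obtain ⟨h1, h2⟩ := hB'
        obtain ⟨⟨g1, g2⟩, g3⟩ := lsub_spec x Iterm B B' h1
        constructor
        · refine Set.eq_empty_iff_forall_notMem.mpr (fun a ha => ?_)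
          rcases g3 ha with h4 | h4
          · exact h2 ((Set.mem_singleton_iff.mp (hfvB h4)) ▸ ha)
          · rw [fv_Iterm] at h4
            exact h4
        · rw [hnvA]
          rw [nv_Iterm] at g2
          omega
      have key : ∀ B' : Tm, ∃ nB, B' ∈ zeroSub x (lsub x Iterm B) → ∀ m, nB ≤ m →
          (Relation.ReflTransGen SStep {iterI m B'} ∅ ∨
            Relation.ReflTransGen SStep {iterI m B'} {Iterm}) := by
        intro B'
        by_cases hB' : B' ∈ zeroSub x (lsub x Iterm B)
        · have hd : nv B' < nv (Tm.lam x B) := (hprop B' hB').2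
          obtain ⟨nB, hnB⟩ := collapse B' (hprop B' hB').1
          exact ⟨nB, fun _ => pad_mono hnB⟩
        · exact ⟨0, fun h => absurd h hB'⟩
      choose f hf using key
      obtain ⟨N, hN⟩ := (hfin.image f).bddAbove
      have key2 : ∀ B' : Tm, ∃ R : Set Tm, B' ∈ zeroSub x (lsub x Iterm B) →
          Relation.ReflTransGen SStep {iterI N B'} R ∧ R ⊆ {Iterm} := by
        intro B'
        by_cases hB' : B' ∈ zeroSub x (lsub x Iterm B)
        · rcases hf B' hB' N (hN (Set.mem_image_of_mem f hB')) with h | h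
          · exact ⟨∅, fun _ => ⟨h, Set.empty_subset _⟩⟩
          · exact ⟨{Iterm}, fun _ => ⟨h, le_refl _⟩⟩
        · exact ⟨∅, fun h => absurd h hB'⟩
      choose g hg using key2
      have hred : Relation.ReflTransGen SStep ((iterI N) '' zeroSub x (lsub x Iterm B))
          (⋃ B' ∈ zeroSub x (lsub x Iterm B), g B') :=
        unionRed _ hfin (fun B' hB' => (hg B' hB').1)
      have hT : (⋃ B' ∈ zeroSub x (lsub x Iterm B), g B') ⊆ {Iterm} := by
        intro a ha
        simp only [Set.mem_iUnion] at ha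
        obtain ⟨B', hB', haB⟩ := ha
        exact (hg B' hB').2 haB
      have hstart : Relation.ReflTransGen SStep {iterI (1 + N) (Tm.lam x B)}
          (⋃ B' ∈ zeroSub x (lsub x Iterm B), g B') := by
        rw [iterI_add]
        have h1 : Step (iterI N (Tm.app (Tm.lam x B) [Iterm]))
            ((iterI N) '' zeroSub x (lsub x Iterm B)) := step_iterI N hstep
        exact Relation.ReflTransGen.head (sstep_singleton h1) hred
      rcases Set.subset_singleton_iff_eq.mp hT with hT' | hT'
      · exact ⟨1 + N, Or.inl (hT' ▸ hstart)⟩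
      · exact ⟨1 + N, Or.inr (hT' ▸ hstart)⟩
  | .app M P, hA => by
    have hM : fv M = ∅ := Set.eq_empty_iff_forall_notMem.mpr
      (fun a ha => Set.eq_empty_iff_forall_notMem.mp hA a (Or.inl ha))
    have hP : fvList P = ∅ := Set.eq_empty_iff_forall_notMem.mpr
      (fun a ha => Set.eq_empty_iff_forall_notMem.mp hA a (Or.inr ha))
    obtain ⟨𝔹, hstep, hfin, hprop⟩ := redex M P hM
    have hclosed : ∀ B ∈ 𝔹, fv B = ∅ := by
      intro B hB
      have := (hprop B hB).1
      rw [hP] at this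
      exact Set.eq_empty_iff_forall_notMem.mpr (fun a ha => this ha)
    have key : ∀ B' : Tm, ∃ nB, B' ∈ 𝔹 → ∀ m, nB ≤ m →
        (Relation.ReflTransGen SStep {iterI m B'} ∅ ∨
          Relation.ReflTransGen SStep {iterI m B'} {Iterm}) := by
      intro B'
      by_cases hB' : B' ∈ 𝔹
      · have hd1 : nv B' ≤ nv (Tm.app M P) := (hprop B' hB').2.2
        have hd2 : sz B' < sz (Tm.app M P) := (hprop B' hB').2.1
        obtain ⟨nB, hnB⟩ := collapse B' (hclosed B' hB')
        exact ⟨nB, fun _ => pad_mono hnB⟩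
      · exact ⟨0, fun h => absurd h hB'⟩
    choose f hf using key
    obtain ⟨N, hN⟩ := (hfin.image f).bddAbove
    have key2 : ∀ B' : Tm, ∃ R : Set Tm, B' ∈ 𝔹 →
        Relation.ReflTransGen SStep {iterI N B'} R ∧ R ⊆ {Iterm} := by
      intro B'
      by_cases hB' : B' ∈ 𝔹
      · rcases hf B' hB' N (hN (Set.mem_image_of_mem f hB')) with h | h
        · exact ⟨∅, fun _ => ⟨h, Set.empty_subset _⟩⟩
        · exact ⟨{Iterm}, fun _ => ⟨h, le_refl _⟩⟩
      · exact ⟨∅, fun h => absurd h hB'⟩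
    choose g hg using key2
    have hred : Relation.ReflTransGen SStep ((iterI N) '' 𝔹) (⋃ B ∈ 𝔹, g B) :=
      unionRed 𝔹 hfin (fun B hB => (hg B hB).1)
    have hT : (⋃ B ∈ 𝔹, g B) ⊆ {Iterm} := by
      intro a ha
      simp only [Set.mem_iUnion] at ha
      obtain ⟨B, hB, haB⟩ := ha
      exact (hg B hB).2 haB
    have hstart : Relation.ReflTransGen SStep {iterI N (Tm.app M P)} (⋃ B ∈ 𝔹, g B) := by
      have h1 : Step (iterI N (Tm.app M P)) ((iterI N) '' 𝔹) := step_iterI N hstep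
      exact Relation.ReflTransGen.head (sstep_singleton h1) hred
    rcases Set.subset_singleton_iff_eq.mp hT with hT' | hT'
    · exact ⟨N, Or.inl (hT' ▸ hstart)⟩
    · exact ⟨N, Or.inr (hT' ▸ hstart)⟩
termination_by A _ => (nv A, sz A)
decreasing_by
  all_goals simp_wf
  all_goals simp only [Prod.lex_iff]
  all_goals omega
theorem foldl_replicate (n : ℕ) (A : Tm) :
    (List.replicate n [Iterm]).foldl Tm.app A = iterI n A := by
  induction n generalizing A with
  | zero => rfl
  | succ n ih =>
    rw [List.replicate_succ, List.foldl_cons]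
    exact ih _

/-- In the `∂₀λ`-calculus, a closed term `M` that reduces to a sum containing the
identity, `M →* I + 𝕄`, can be made to reduce exactly to `I` by applying finitely many
closed bags: there are bags `P₁,…,Pₙ` of closed terms with `M P₁ ⋯ Pₙ →* I`. -/
theorem closed_term_reducing_to_I_plus_sum (M : Tm) (hM : fv M = ∅) (𝕄 : Set Tm)
    (h : Relation.ReflTransGen SStep {M} (insert Iterm 𝕄)) :
    ∃ Ps : List (List Tm), (∀ P ∈ Ps, ∀ L ∈ P, fv L = ∅) ∧
      Relation.ReflTransGen SStep {Ps.foldl Tm.app M} {Iterm} := by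
  set E : Set Tm := insert Iterm 𝕄 with hE
  have hEfin : E.Finite := rtg_fin h (Set.finite_singleton M)
  have hEclosed : ∀ A ∈ E, fv A = ∅ := by
    refine rtg_closed h ?_
    intro A hA
    rw [Set.mem_singleton_iff] at hA
    subst hA
    exact hM
  have key : ∀ A : Tm, ∃ n, A ∈ E → ∀ m, n ≤ m →
      (Relation.ReflTransGen SStep {iterI m A} ∅ ∨
        Relation.ReflTransGen SStep {iterI m A} {Iterm}) := by
    intro A
    by_cases hA : A ∈ E
    · obtain ⟨n, hn⟩ := collapse A (hEclosed A hA)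
      exact ⟨n, fun _ => pad_mono hn⟩
    · exact ⟨0, fun hc => absurd hc hA⟩
  choose f hf using key
  obtain ⟨N, hN⟩ := (hEfin.image f).bddAbove
  have key2 : ∀ A : Tm, ∃ R : Set Tm, A ∈ E →
      (Relation.ReflTransGen SStep {iterI N A} R ∧ R ⊆ {Iterm} ∧
        (A = Iterm → R = {Iterm})) := by
    intro A
    by_cases hAI : A = Iterm
    · subst hAI
      exact ⟨{Iterm}, fun _ => ⟨pad N, le_refl _, fun _ => rfl⟩⟩
    · by_cases hA : A ∈ E
      · rcases hf A hA N (hN (Set.mem_image_of_mem f hA)) with h' | h'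
        · exact ⟨∅, fun _ => ⟨h', Set.empty_subset _, fun hc => absurd hc hAI⟩⟩
        · exact ⟨{Iterm}, fun _ => ⟨h', le_refl _, fun _ => rfl⟩⟩
      · exact ⟨∅, fun hc => absurd hc hA⟩
  choose g hg using key2
  have hred : Relation.ReflTransGen SStep ((iterI N) '' E) (⋃ A ∈ E, g A) :=
    unionRed E hEfin (fun A hA => (hg A hA).1)
  have hIT : Iterm ∈ E := Set.mem_insert _ _
  have hT : (⋃ A ∈ E, g A) = {Iterm} := by
    apply Set.Subset.antisymm
    · intro a ha
      simp only [Set.mem_iUnion] at ha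
      obtain ⟨A, hA, haA⟩ := ha
      exact (hg A hA).2.1 haA
    · intro a ha
      rw [Set.mem_singleton_iff] at ha
      subst ha
      simp only [Set.mem_iUnion]
      exact ⟨Iterm, hIT, by rw [(hg Iterm hIT).2.2 rfl]; exact rfl⟩
  refine ⟨List.replicate N [Iterm], ?_, ?_⟩
  · intro P hP L hL
    rw [List.eq_of_mem_replicate hP] at hL
    rw [List.mem_singleton] at hL
    subst hL
    exact fv_Iterm
  · rw [foldl_replicate]
    have h1 : Relation.ReflTransGen SStep ((iterI N) '' {M}) ((iterI N) '' E) :=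
      rtg_image_iterI N h
    rw [Set.image_singleton] at h1
    refine h1.trans ?_
    rw [← hT]
    exact hred
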